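/- Let 0 < k < n and let M = U_{k,n}(q) be the uniform q-matroid of rank k on E = F_q^n. Then for every m < n, there is no F_q-linear rank-metric code C ⊆ F_q^{n×m} such that M = M[C], i.e., such that for all subspaces U of E, (dim C - dim C(U^⊥))/m = min{k, dim U}. -/

import Mathlib

open Matrix

variable {F : Type*} [Field F]

/-- Column space of a matrix: the span of its columns. -/
def colSpace {n m : ℕ} (M : Matrix (Fin n) (Fin m) F) : Submodule F (Fin n → F) :=
  Submodule.span F (Set.range Mᵀ)

lemma colSpace_le_iff {n m : ℕ} (M : Matrix (Fin n) (Fin m) F) (U : Submodule F (Fin n → F)) :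
    colSpace M ≤ U ↔ ∀ j, Mᵀ j ∈ U := by
  rw [colSpace, Submodule.span_le]
  constructor
  · intro h j; exact h ⟨j, rfl⟩
  · rintro h _ ⟨j, rfl⟩; exact h j

/-- `C(U)`: the codewords of `C` whose column space is contained in `U`. -/
def codeCU {n m : ℕ} (C : Submodule F (Matrix (Fin n) (Fin m) F))
    (U : Submodule F (Fin n → F)) : Submodule F (Matrix (Fin n) (Fin m) F) where
  carrier := {M | M ∈ C ∧ colSpace M ≤ U}
  add_mem' := by
    rintro a b ⟨haC, ha⟩ ⟨hbC, hb⟩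
    refine ⟨C.add_mem haC hbC, (colSpace_le_iff _ _).2 fun j => ?_⟩
    have h := U.add_mem ((colSpace_le_iff a U).1 ha j) ((colSpace_le_iff b U).1 hb j)
    rw [Matrix.transpose_add]; exact h
  zero_mem' := by
    exact ⟨C.zero_mem, (colSpace_le_iff _ _).2 fun j => U.zero_mem⟩
  smul_mem' := by
    rintro c a ⟨haC, ha⟩
    refine ⟨C.smul_mem c haC, (colSpace_le_iff _ _).2 fun j => ?_⟩
    have h := U.smul_mem c ((colSpace_le_iff a U).1 ha j)
    rw [Matrix.transpose_smul]; exact h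

/-- Orthogonal complement with respect to the standard (dot-product) bilinear form. -/
def perp {n : ℕ} (U : Submodule F (Fin n → F)) : Submodule F (Fin n → F) where
  carrier := {v | ∀ u ∈ U, v ⬝ᵥ u = 0}
  add_mem' := by
    intro a b ha hb u hu
    rw [add_dotProduct, ha u hu, hb u hu, add_zero]
  zero_mem' := by
    intro u hu
    rw [zero_dotProduct]
  smul_mem' := by
    intro c a ha u hu
    rw [smul_dotProduct, ha u hu, smul_zero]

/-- The minimum rank distance of a matrix code. -/
noncomputable def minRankDist {n m : ℕ} (C : Submodule F (Matrix (Fin n) (Fin m) F)) : ℕ :=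
  sInf {r : ℕ | ∃ M ∈ C, M ≠ 0 ∧ M.rank = r}

/-- The rank function of the q-polymatroid associated to a matrix rank-metric code. -/
noncomputable def rhoCode {n m : ℕ} (C : Submodule F (Matrix (Fin n) (Fin m) F))
    (U : Submodule F (Fin n → F)) : ℚ :=
  ((Module.finrank F C : ℚ) - (Module.finrank F (codeCU C (perp U)) : ℚ)) / (m : ℚ)

lemma perp_finrank_ge {n : ℕ} (U : Submodule F (Fin n → F)) :
    n - Module.finrank F U ≤ Module.finrank F (perp U) := by
  classical
  let g : (Fin n → F) →ₗ[F] Module.Dual F U :=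
    { toFun := fun v =>
        { toFun := fun u => v ⬝ᵥ (u : Fin n → F)
          map_add' := by intro a b; simp [dotProduct_add]
          map_smul' := by intro c a; simp }
      map_add' := by intro a b; ext u; simp [add_dotProduct]
      map_smul' := by intro c a; ext u; simp [smul_dotProduct] }
  have hker : perp U = LinearMap.ker g := by
    ext v
    constructor
    · intro hv
      simp only [LinearMap.mem_ker]
      ext u
      exact hv u u.2
    · intro hv u hu
      have := LinearMap.congr_fun hv ⟨u, hu⟩
      simpa [g] using this
  have hrn := LinearMap.finrank_range_add_finrank_ker g
  have hpi : Module.finrank F (Fin n → F) = n := by simp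
  have hrange : Module.finrank F (LinearMap.range g) ≤ Module.finrank F U := by
    have := Submodule.finrank_le (LinearMap.range g)
    rwa [Subspace.dual_finrank_eq] at this
  rw [hker]
  omega

lemma perp_top_eq_bot {n : ℕ} : perp (⊤ : Submodule F (Fin n → F)) = ⊥ := by
  ext v
  simp only [Submodule.mem_bot]
  constructor
  · intro hv
    funext i
    have := hv (Pi.single i 1) trivial
    simpa [dotProduct_single] using this
  · rintro rfl u _
    exact zero_dotProduct u

lemma codeCU_bot_eq_bot {n m : ℕ} (C : Submodule F (Matrix (Fin n) (Fin m) F)) :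
    codeCU C ⊥ = ⊥ := by
  ext M
  simp only [Submodule.mem_bot]
  constructor
  · rintro ⟨-, h⟩
    have h' := (colSpace_le_iff M ⊥).1 h
    ext i j
    have := h' j
    simp only [Submodule.mem_bot] at this
    exact congrFun this i
  · rintro rfl
    exact (codeCU C ⊥).zero_mem

/-- the nontrivial uniform q-matroid `U_{k,n}(q)` is not
`F_q^{n×m}`-representable for any `m < n`. -/
theorem uniform_not_representable [Fintype F] {n k : ℕ} (hk0 : 0 < k) (hkn : k < n) :
    ∀ m : ℕ, 0 < m → m < n →
      ¬ ∃ C : Submodule F (Matrix (Fin n) (Fin m) F),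
          ∀ U : Submodule F (Fin n → F),
            rhoCode C U = ((min k (Module.finrank F U) : ℕ) : ℚ) := by
  intro m hm0 hmn
  rintro ⟨C, hC⟩
  classical
  have hmQ : (m : ℚ) ≠ 0 := by exact_mod_cast hm0.ne'
  -- Step 1: dim C = k * m
  have hdimC : Module.finrank F C = k * m := by
    have h := hC ⊤
    rw [rhoCode, perp_top_eq_bot, codeCU_bot_eq_bot] at h
    have htop : Module.finrank F (⊤ : Submodule F (Fin n → F)) = n := by simp
    have hb : Module.finrank F (⊥ : Submodule F (Matrix (Fin n) (Fin m) F)) = 0 :=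
      finrank_bot F _
    rw [htop, min_eq_left hkn.le, hb, div_eq_iff hmQ] at h
    rw [Nat.cast_zero, sub_zero] at h
    exact_mod_cast h
  -- Step 2: every nonzero codeword has column space of dimension > n - k
  have hdist : ∀ M ∈ C, M ≠ 0 → n - k < Module.finrank F (colSpace M) := by
    intro M hMC hM0
    by_contra hle
    push_neg at hle
    have hUk : k ≤ Module.finrank F (perp (colSpace M)) := by
      have h1 := perp_finrank_ge (colSpace M)
      omega
    have h := hC (perp (colSpace M))
    rw [rhoCode, min_eq_left hUk, hdimC, div_eq_iff hmQ] at h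
    have hz : Module.finrank F (codeCU C (perp (perp (colSpace M)))) = 0 := by
      have : ((Module.finrank F (codeCU C (perp (perp (colSpace M)))) : ℚ)) = 0 := by
        push_cast at h ⊢
        linarith
      exact_mod_cast this
    have hbot : codeCU C (perp (perp (colSpace M))) = ⊥ := Submodule.finrank_eq_zero.1 hz
    have hmem : M ∈ codeCU C (perp (perp (colSpace M))) := by
      refine ⟨hMC, (colSpace_le_iff _ _).2 fun j => ?_⟩
      intro u hu
      rw [dotProduct_comm]
      exact hu (Mᵀ j) (Submodule.subset_span ⟨j, rfl⟩)
    rw [hbot] at hmem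
    exact hM0 (by simpa using hmem)
  -- Step 3: column deletion gives an injection C ↪ F^{n × s}
  set s := m - (n - k) with hs
  have hsm : s ≤ m := Nat.sub_le _ _
  let Φ : C →ₗ[F] Matrix (Fin n) (Fin s) F :=
    { toFun := fun M => fun i j => (M : Matrix (Fin n) (Fin m) F) i (Fin.castLE hsm j)
      map_add' := by intro a b; rfl
      map_smul' := by intro c a; rfl }
  have hinj : Function.Injective Φ := by
    rw [← LinearMap.ker_eq_bot, eq_bot_iff]
    rintro ⟨M, hMC⟩ hM
    simp only [LinearMap.mem_ker] at hM
    have hcols : ∀ j : Fin m, (j : ℕ) < s → Mᵀ j = 0 := by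
      intro j hj
      funext i
      exact congrFun (congrFun hM i) ⟨j, hj⟩
    have hM0 : M = 0 := by
      by_contra hne
      have hgt := hdist M hMC hne
      let g : Fin (m - s) → (Fin n → F) := fun j => Mᵀ ⟨s + (j : ℕ), by
        have := j.isLt; omega⟩
      have hsub : colSpace M ≤ Submodule.span F (Set.range g) := by
        rw [colSpace_le_iff]
        intro j
        have hjm := j.isLt
        by_cases hj : (j : ℕ) < s
        · rw [hcols j hj]; exact Submodule.zero_mem _
        · have hb : s + ((j : ℕ) - s) < m := by omega
          have hje : (⟨s + ((j : ℕ) - s), hb⟩ : Fin m) = j := by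
            apply Fin.ext
            simp only [Fin.val_mk]
            omega
          exact Submodule.subset_span ⟨⟨(j : ℕ) - s, by omega⟩, by
            simp only [g]; exact congrArg Mᵀ hje⟩
      have hle1 : Module.finrank F (colSpace M) ≤ m - s :=
        le_trans (Submodule.finrank_mono hsub)
          (le_trans (finrank_range_le_card g) (by simp))
      omega
    exact (Submodule.mk_eq_zero _ _).2 hM0
  have hcard : Module.finrank F C ≤ n * s := by
    have := LinearMap.finrank_le_finrank_of_injective hinj
    rwa [Module.finrank_matrix, Module.finrank_self, mul_one, Fintype.card_fin,
      Fintype.card_fin] at this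
  rw [hdimC] at hcard
  -- arithmetic contradiction
  rcases le_or_gt m (n - k) with h | h
  · have hs0 : s = 0 := by omega
    rw [hs0, mul_zero] at hcard
    have := Nat.mul_pos hk0 hm0
    omega
  · have h1 : s + (n - k) = m := by omega
    have h2 : (n - k) + k = n := by omega
    have key : (k : ℤ) * m ≤ (n : ℤ) * s := by exact_mod_cast hcard
    have e1 : (s : ℤ) + ((n : ℤ) - k) = m := by push_cast [← h1]; omega
    have e2 : ((n : ℤ) - k) + k = n := by omega
    have ha1 : (1 : ℤ) ≤ (n : ℤ) - k := by
      have : k < n := hkn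
      omega
    have hmn' : (m : ℤ) < n := by exact_mod_cast hmn
    have hs0 : (0 : ℤ) ≤ s := by positivity
    have hk0' : (1 : ℤ) ≤ k := by exact_mod_cast hk0
    nlinarith [key, e1, e2, ha1, hmn', hs0, hk0']
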